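/- arXiv:1202.1504 — 2 statements merged into one kernel-verified Lean document; each statement's English description precedes it below -/
import Mathlib

section
/- Let ν ∈ (−1,0) and 0 ≤ β < 1, and let x_{ν,β} be a positive root of the equation r I_ν'(r) − βν I_ν(r) = 0, where I_ν is the modified Bessel function of the first kind. Then x_{ν,β}² < (−ν(1−β)/(2 + ν(1−β))) j_{ν,1}² < j_{ν,1}², where j_{ν,1} is the smallest positive zero of J_ν; in particular x_{ν,β} < j_{ν,1}. -/
open Complex

/-- The Bessel function of the first kind `J_ν`, defined by its series with
principal-branch complex powers. -/
noncomputable def besselJ (ν : ℝ) (z : ℂ) : ℂ :=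
  ∑' n : ℕ, ((-1 : ℂ) ^ n / ((n.factorial : ℂ) * Complex.Gamma ((n : ℂ) + ν + 1))) *
    (z / 2) ^ (2 * (n : ℂ) + ν)

/-- The modified Bessel function of the first kind `I_ν`. -/
noncomputable def besselI (ν : ℝ) (z : ℂ) : ℂ :=
  ∑' n : ℕ, (1 / ((n.factorial : ℂ) * Complex.Gamma ((n : ℂ) + ν + 1))) *
    (z / 2) ^ (2 * (n : ℂ) + ν)

/-- The normalization `f_ν(z) = exp((1/ν) Log(2^ν Γ(ν+1) J_ν(z)))`. -/
noncomputable def besselF (ν : ℝ) (z : ℂ) : ℂ :=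
  Complex.exp ((ν : ℂ)⁻¹ *
    Complex.log ((2 : ℂ) ^ (ν : ℂ) * Complex.Gamma ((ν : ℂ) + 1) * besselJ ν z))

/-- The normalization `g_ν(z) = 2^ν Γ(ν+1) z^{1-ν} J_ν(z)`. -/
noncomputable def besselG (ν : ℝ) (z : ℂ) : ℂ :=
  (2 : ℂ) ^ (ν : ℂ) * Complex.Gamma ((ν : ℂ) + 1) * z ^ ((1 : ℂ) - ν) * besselJ ν z

/-- The normalization `h_ν(z) = 2^ν Γ(ν+1) z^{1-ν/2} J_ν(√z)`. -/
noncomputable def besselH (ν : ℝ) (z : ℂ) : ℂ :=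
  (2 : ℂ) ^ (ν : ℂ) * Complex.Gamma ((ν : ℂ) + 1) * z ^ ((1 : ℂ) - (ν : ℂ) / 2) *
    besselJ ν (z ^ (1 / 2 : ℂ))

/-- The radius of starlikeness of order `β` of a function `f` analytic near `0`
with `f(0) = 0`, `f'(0) = 1`:
`r*_β(f) = sup { r > 0 : Re[z f'(z)/f(z)] > β for all 0 < |z| < r }`. -/
noncomputable def radiusOfStarlikeness (β : ℝ) (f : ℂ → ℂ) : ℝ :=
  sSup {r : ℝ | 0 < r ∧ ∀ z : ℂ, 0 < ‖z‖ → ‖z‖ < r →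
    β < (z * deriv f z / f z).re}

namespace SqRoot

/-- The coefficient `a_n = 1/(4^n n! Γ(n+ν+1))`. -/
noncomputable def a (ν : ℝ) (n : ℕ) : ℝ :=
  1 / (4 ^ n * n.factorial * Real.Gamma (n + ν + 1))

lemma gamma_pos {ν : ℝ} (hν : -1 < ν) (n : ℕ) : 0 < Real.Gamma (n + ν + 1) := by
  apply Real.Gamma_pos_of_pos
  have : (0:ℝ) ≤ n := n.cast_nonneg
  linarith

lemma a_pos {ν : ℝ} (hν : -1 < ν) (n : ℕ) : 0 < a ν n := by
  have := gamma_pos hν n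
  have hf : (0:ℝ) < n.factorial := by exact_mod_cast n.factorial_pos
  unfold a; positivity

lemma a_succ {ν : ℝ} (hν : -1 < ν) (n : ℕ) :
    a ν n = 4 * (n + 1) * (n + ν + 1) * a ν (n + 1) := by
  have hne : (n:ℝ) + ν + 1 ≠ 0 := by
    have : (0:ℝ) ≤ n := n.cast_nonneg
    intro h; linarith [show (0:ℝ) < (n:ℝ) + ν + 1 by linarith]
  have hΓ : Real.Gamma ((n:ℝ) + 1 + ν + 1) = ((n:ℝ) + ν + 1) * Real.Gamma ((n:ℝ) + ν + 1) := by
    have h : (n:ℝ) + 1 + ν + 1 = ((n:ℝ) + ν + 1) + 1 := by ring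
    rw [h, Real.Gamma_add_one hne]
  unfold a
  rw [show ((n+1 : ℕ):ℝ) = (n:ℝ) + 1 by push_cast; ring] at *
  rw [hΓ]
  have hΓpos := gamma_pos hν n
  have hf : (0:ℝ) < n.factorial := by exact_mod_cast n.factorial_pos
  rw [Nat.factorial_succ]; push_cast; field_simp; ring

lemma summable_master {ν : ℝ} (hν : -1 < ν) {r : ℝ} (hr : 0 ≤ r) :
    Summable (fun n : ℕ => ((n:ℝ) + 1) * a ν n * r ^ n) := by
  apply summable_of_ratio_norm_eventually_le (r := 1/2) (by norm_num)
  filter_upwards [Filter.eventually_ge_atTop (max 1 ⌈r⌉₊)] with n hn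
  have hn1 : 1 ≤ n := le_of_max_le_left hn
  have hnr : r ≤ n := le_trans (Nat.le_ceil r) (by exact_mod_cast le_of_max_le_right hn)
  have hnpos : (1:ℝ) ≤ (n:ℝ) := by exact_mod_cast hn1
  have han := a_pos hν n
  have han1 := a_pos hν (n+1)
  have hsucc := a_succ hν n
  have hrn : (0:ℝ) ≤ r ^ n := pow_nonneg hr n
  rw [Real.norm_of_nonneg (by positivity), Real.norm_of_nonneg (by positivity)]
  have key : ((n:ℝ) + 1 + 1) * r ≤ 1/2 * ((n:ℝ)+1) * (4 * ((n:ℝ)+1) * ((n:ℝ)+ν+1)) := by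
    have h1 : (n:ℝ) + ν + 1 > (n:ℝ) := by linarith
    nlinarith [sq_nonneg ((n:ℝ)+1)]
  have expand : ((n:ℝ)+1+1) * a ν (n+1) * r^(n+1) = (((n:ℝ)+1+1) * r) * a ν (n+1) * r^n := by
    rw [pow_succ]; ring
  push_cast
  rw [expand, hsucc]
  have : (0:ℝ) < 4 * ((n:ℝ)+1) * ((n:ℝ)+ν+1) := by nlinarith
  calc (((n:ℝ)+1+1) * r) * a ν (n+1) * r^n
      ≤ (1/2 * ((n:ℝ)+1) * (4 * ((n:ℝ)+1) * ((n:ℝ)+ν+1))) * a ν (n+1) * r^n := by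
        apply mul_le_mul_of_nonneg_right (mul_le_mul_of_nonneg_right key (le_of_lt han1)) hrn
    _ = 1/2 * (((n:ℝ)+1) * (4 * ((n:ℝ)+1) * ((n:ℝ)+ν+1) * a ν (n+1)) * r^n) := by ring

lemma summable_A {ν : ℝ} (hν : -1 < ν) {r : ℝ} (hr : 0 ≤ r) :
    Summable (fun n : ℕ => a ν n * r ^ n) := by
  refine (summable_master hν hr).of_nonneg_of_le
    (fun n => mul_nonneg (a_pos hν n).le (pow_nonneg hr n)) fun n => ?_
  nlinarith [mul_nonneg (mul_nonneg (n.cast_nonneg (α := ℝ)) (a_pos hν n).le) (pow_nonneg hr n)]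

lemma summable_nA {ν : ℝ} (hν : -1 < ν) {r : ℝ} (hr : 0 ≤ r) :
    Summable (fun n : ℕ => (n:ℝ) * a ν n * r ^ n) := by
  refine (summable_master hν hr).of_nonneg_of_le
    (fun n => mul_nonneg (mul_nonneg (n.cast_nonneg (α := ℝ)) (a_pos hν n).le)
      (pow_nonneg hr n)) fun n => ?_
  nlinarith [mul_nonneg (a_pos hν n).le (pow_nonneg hr n)]

lemma summable_P {ν : ℝ} (hν : -1 < ν) {r : ℝ} (hr : 0 ≤ r) :
    Summable (fun n : ℕ => (-1:ℝ) ^ n * a ν n * r ^ n) := by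
  refine (summable_A hν hr).of_norm_bounded fun n => ?_
  have ha := a_pos hν n
  have h := pow_nonneg hr n
  rw [Real.norm_eq_abs, abs_mul, abs_mul, _root_.abs_pow, _root_.abs_neg, abs_one, one_pow,
    one_mul, _root_.abs_of_pos ha, _root_.abs_of_nonneg h]

lemma summable_Gc {ν : ℝ} (hν : -1 < ν) (z : ℂ) :
    Summable (fun n : ℕ => ((a ν n : ℝ) : ℂ) * z ^ (2 * n)) := by
  apply Summable.of_norm
  have h : ∀ n : ℕ, ‖((a ν n : ℝ) : ℂ) * z ^ (2 * n)‖ = a ν n * (‖z‖ ^ 2) ^ n := by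
    intro n
    rw [norm_mul, norm_pow, Complex.norm_real, Real.norm_eq_abs, _root_.abs_of_pos (a_pos hν n),
      ← pow_mul]
  simp only [h]
  exact summable_A hν (by positivity)

lemma summable_u {ν : ℝ} (hν : -1 < ν) {R : ℝ} (hR : 1 ≤ R) :
    Summable (fun n : ℕ => a ν n * (2 * n) * R ^ (2 * n - 1)) := by
  have h0 : (0:ℝ) ≤ R := by linarith
  refine ((summable_master hν (r := R^2) (by positivity)).mul_left 2).of_nonneg_of_le
    (fun n => mul_nonneg (mul_nonneg (a_pos hν n).le (by positivity)) (pow_nonneg h0 _))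
    fun n => ?_
  have h1 : R ^ (2*n - 1) ≤ R ^ (2*n) := pow_le_pow_right₀ hR (Nat.sub_le _ _)
  have h2 : (R^2)^n = R^(2*n) := by rw [← pow_mul, mul_comm]
  have ha := a_pos hν n
  calc a ν n * (2*n) * R^(2*n-1) ≤ a ν n * (2*n) * R^(2*n) := by
        apply mul_le_mul_of_nonneg_left h1 (by positivity)
    _ ≤ 2 * (((n:ℝ)+1) * a ν n * (R^2)^n) := by
        rw [h2]
        nlinarith [pow_nonneg h0 (2*n), n.cast_nonneg (α := ℝ)]

lemma P_pos {ν : ℝ} (hν : -1 < ν) {s : ℝ} (hs : 0 < s) (hs4 : s ≤ 4 * (ν + 1)) :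
    0 < ∑' n : ℕ, (-1:ℝ) ^ n * a ν n * s ^ n := by
  set f : ℕ → ℝ := fun n => (-1:ℝ) ^ n * a ν n * s ^ n with hf_def
  have hf : Summable f := summable_P hν hs.le
  have he : Summable fun k => f (2 * k) :=
    hf.comp_injective (fun i j h => by omega)
  have ho : Summable fun k => f (2 * k + 1) :=
    hf.comp_injective (fun i j h => by omega)
  have hsum : ∑' k, (f (2 * k) + f (2 * k + 1)) = ∑' n, f n := by
    rw [Summable.tsum_add he ho, tsum_even_add_odd he ho]
  set g : ℕ → ℝ := fun k => f (2 * k) + f (2 * k + 1) with hg_def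
  have hgval : ∀ k, g k = s ^ (2 * k) * (a ν (2 * k) - a ν (2 * k + 1) * s) := by
    intro k
    have h1 : (-1:ℝ) ^ (2 * k) = 1 := by
      rw [pow_mul]; norm_num
    have h2 : (-1:ℝ) ^ (2 * k + 1) = -1 := by
      rw [pow_succ, h1]; norm_num
    simp only [hg_def, hf_def, h1, h2, pow_succ]
    ring
  have hkey : ∀ k : ℕ, a ν (2 * k + 1) * s ≤ a ν (2 * k) := by
    intro k
    have hrec := a_succ hν (2 * k)
    have ha1 := a_pos hν (2 * k + 1)
    have hk : (0:ℝ) ≤ (k : ℝ) := k.cast_nonneg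
    have hbig : 4 * (ν + 1) ≤ 4 * (2 * (k:ℝ) + 1) * ((2 * k : ℕ) + ν + 1) := by
      push_cast
      nlinarith
    calc a ν (2*k+1) * s ≤ a ν (2*k+1) * (4 * (ν+1)) := by
          exact mul_le_mul_of_nonneg_left hs4 ha1.le
      _ ≤ a ν (2*k+1) * (4 * (2 * (k:ℝ) + 1) * ((2*k:ℕ) + ν + 1)) := by
          exact mul_le_mul_of_nonneg_left hbig ha1.le
      _ = a ν (2*k) := by rw [hrec]; push_cast; ring
  have hgnonneg : ∀ k, 0 ≤ g k := by
    intro k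
    rw [hgval k]
    have := hkey k
    have hsp : (0:ℝ) ≤ s ^ (2*k) := pow_nonneg hs.le _
    nlinarith
  have hg1 : 0 < g 1 := by
    rw [hgval 1]
    have hrec := a_succ hν 2
    have ha3 := a_pos hν 3
    have hlt : a ν (2*1+1) * s < a ν (2*1) := by
      norm_num
      calc a ν 3 * s ≤ a ν 3 * (4 * (ν+1)) := mul_le_mul_of_nonneg_left hs4 ha3.le
        _ < a ν 3 * (4 * 3 * ((2:ℕ) + ν + 1)) := by
            apply mul_lt_mul_of_pos_left _ ha3
            push_cast
            nlinarith
        _ = a ν 2 := by rw [hrec]; push_cast; ring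
    have hsp : (0:ℝ) < s ^ (2*1) := pow_pos hs _
    nlinarith
  have hgsum : Summable g := he.add ho
  calc (0:ℝ) < g 1 := hg1
    _ ≤ ∑' k, g k := Summable.le_tsum hgsum 1 (fun j _ => hgnonneg j)
    _ = ∑' n, f n := hsum

lemma gamma_ne {ν : ℝ} (hν : -1 < ν) (n : ℕ) : Real.Gamma ((n:ℝ) + ν + 1) ≠ 0 :=
  (gamma_pos hν n).ne'

lemma gammaC_eq {ν : ℝ} (n : ℕ) :
    Complex.Gamma ((n : ℂ) + ν + 1) = ((Real.Gamma ((n:ℝ) + ν + 1) : ℝ) : ℂ) := by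
  rw [← Complex.Gamma_ofReal]
  norm_num

lemma term_bridge {ν : ℝ} (hν : -1 < ν) {z : ℂ} (hz : z ≠ 0) (n : ℕ) :
    (1 / ((n.factorial : ℂ) * Complex.Gamma ((n : ℂ) + ν + 1))) * (z / 2) ^ (2 * (n : ℂ) + ν)
      = (z / 2) ^ (ν : ℂ) * (((a ν n : ℝ) : ℂ) * z ^ (2 * n)) := by
  have hw : z / 2 ≠ 0 := by simpa using hz
  have hexp : 2 * (n : ℂ) + ν = ((2 * n : ℕ) : ℂ) + (ν : ℂ) := by push_cast; ring
  rw [hexp, Complex.cpow_add _ _ hw, Complex.cpow_natCast, gammaC_eq]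
  have hΓ := gamma_ne hν n
  have hf : (n.factorial : ℂ) ≠ 0 := by exact_mod_cast n.factorial_pos.ne'
  have h4 : ((4:ℝ) ^ n : ℂ) ≠ 0 := by exact_mod_cast (by positivity : ((4:ℝ) ^ n) ≠ 0)
  unfold a
  have h24 : ((2:ℂ)) ^ (2*n) = ((4:ℝ)^n : ℂ) := by
    push_cast
    rw [pow_mul]
    norm_num
  rw [div_pow, h24]
  push_cast
  field_simp

lemma besselI_eq {ν : ℝ} (hν : -1 < ν) {z : ℂ} (hz : z ≠ 0) :
    besselI ν z = (z / 2) ^ (ν : ℂ) * ∑' n : ℕ, ((a ν n : ℝ) : ℂ) * z ^ (2 * n) := by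
  unfold besselI
  rw [← tsum_mul_left]
  exact tsum_congr fun n => term_bridge hν hz n

lemma besselJ_eq_real {ν : ℝ} (hν : -1 < ν) {r : ℝ} (hr : 0 < r) :
    besselJ ν (r : ℂ) = ((r : ℂ) / 2) ^ (ν : ℂ) *
      ((∑' n : ℕ, (-1:ℝ) ^ n * a ν n * (r^2) ^ n : ℝ) : ℂ) := by
  unfold besselJ
  rw [ofReal_tsum, ← tsum_mul_left]
  apply tsum_congr fun n => ?_
  have hz : (r : ℂ) ≠ 0 := by exact_mod_cast hr.ne'
  have h := term_bridge hν (ν := ν) hz n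
  calc (-1:ℂ)^n / ((n.factorial : ℂ) * Complex.Gamma ((n : ℂ) + ν + 1)) *
        ((r:ℂ) / 2) ^ (2 * (n : ℂ) + ν)
      = (-1:ℂ)^n * ((1 / ((n.factorial : ℂ) * Complex.Gamma ((n : ℂ) + ν + 1))) *
        ((r:ℂ) / 2) ^ (2 * (n : ℂ) + ν)) := by ring
    _ = (-1:ℂ)^n * (((r:ℂ) / 2) ^ (ν : ℂ) * (((a ν n : ℝ) : ℂ) * (r:ℂ) ^ (2 * n))) := by rw [h]
    _ = ((r:ℂ) / 2) ^ (ν : ℂ) * (((-1:ℝ) ^ n * a ν n * (r^2) ^ n : ℝ) : ℂ) := by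
        push_cast
        rw [← pow_mul, mul_comm 2 n]
        ring

/-- The entire part `G(z) = ∑ a_n z^(2n)`. -/
noncomputable def Gc (ν : ℝ) (z : ℂ) : ℂ := ∑' n : ℕ, ((a ν n : ℝ) : ℂ) * z ^ (2 * n)

lemma Gc_hasDerivAt {ν : ℝ} (hν : -1 < ν) (y : ℂ) :
    HasDerivAt (Gc ν) (∑' n : ℕ, ((a ν n : ℝ) : ℂ) * (((2 * n : ℕ) : ℂ) * y ^ (2 * n - 1))) y := by
  set R : ℝ := ‖y‖ + 1 with hR
  have hR1 : (1:ℝ) ≤ R := by have := norm_nonneg y; rw [hR]; linarith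
  apply hasDerivAt_tsum_of_isPreconnected (u := fun n => a ν n * (2 * n) * R ^ (2 * n - 1))
    (summable_u hν hR1) (Metric.isOpen_ball (x := (0:ℂ)) (ε := R))
    ((convex_ball (0:ℂ) R).isPreconnected)
    (g' := fun n z => ((a ν n : ℝ) : ℂ) * (((2 * n : ℕ) : ℂ) * z ^ (2 * n - 1)))
    (y₀ := y)
  · intro n z _
    exact (hasDerivAt_pow (2 * n) z).const_mul _
  · intro n z hz
    rw [Metric.mem_ball, dist_zero_right] at hz
    rw [norm_mul, norm_mul, Complex.norm_real, norm_pow]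
    have h1 : ‖((2 * n : ℕ) : ℂ)‖ = (2 * n : ℕ) := by
      rw [Complex.norm_natCast]
    have hzR : ‖z‖ ≤ R := hz.le
    have : ‖z‖ ^ (2 * n - 1) ≤ R ^ (2 * n - 1) :=
      pow_le_pow_left₀ (norm_nonneg z) hzR _
    calc ‖(a ν n : ℝ)‖ * (‖((2 * n : ℕ) : ℂ)‖ * ‖z‖ ^ (2 * n - 1))
        ≤ ‖(a ν n : ℝ)‖ * (‖((2 * n : ℕ) : ℂ)‖ * R ^ (2 * n - 1)) := by
          apply mul_le_mul_of_nonneg_left (mul_le_mul_of_nonneg_left this (norm_nonneg _))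
            (norm_nonneg _)
      _ = a ν n * (2 * n) * R ^ (2 * n - 1) := by
          rw [h1, Real.norm_eq_abs, _root_.abs_of_pos (a_pos hν n)]
          push_cast; ring
  · rw [Metric.mem_ball, dist_zero_right]; linarith
  · exact summable_Gc hν y
  · rw [Metric.mem_ball, dist_zero_right]; linarith

lemma besselI_hasDerivAt {ν : ℝ} (hν : -1 < ν) {x : ℝ} (hx : 0 < x) :
    HasDerivAt (besselI ν)
      ((ν : ℂ) * ((x:ℂ) / 2) ^ ((ν:ℂ) - 1) * (1/2) * Gc ν x +
        ((x:ℂ) / 2) ^ (ν:ℂ) *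
          ∑' n : ℕ, ((a ν n : ℝ) : ℂ) * (((2 * n : ℕ) : ℂ) * (x:ℂ) ^ (2 * n - 1)))
      (x : ℂ) := by
  have hx0 : (x:ℂ) ≠ 0 := by exact_mod_cast hx.ne'
  have hslit : ((x:ℂ)/2) ∈ Complex.slitPlane := by
    rw [show ((x:ℂ)/2) = (((x/2 : ℝ)):ℂ) by push_cast; ring]
    exact Complex.ofReal_mem_slitPlane.2 (by linarith)
  have h1 : HasDerivAt (fun z : ℂ => (z / 2) ^ (ν:ℂ))
      ((ν:ℂ) * ((x:ℂ)/2) ^ ((ν:ℂ) - 1) * (1/2)) (x:ℂ) := by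
    have hd : HasDerivAt (fun z : ℂ => z / 2) (1/2) (x:ℂ) := by
      simpa using (hasDerivAt_id (x:ℂ)).div_const 2
    exact hd.cpow_const hslit
  have h2 := Gc_hasDerivAt hν (x : ℂ)
  have hprod := h1.mul h2
  have heq : besselI ν =ᶠ[nhds (x:ℂ)] fun z => (z / 2) ^ (ν:ℂ) * Gc ν z := by
    filter_upwards [isOpen_compl_singleton.mem_nhds (by simpa using hx0 :
      (x:ℂ) ∈ ({(0:ℂ)}ᶜ : Set ℂ))] with z hz
    exact besselI_eq hν hz
  exact hprod.congr_of_eventuallyEq heq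

lemma key_eq {ν β x : ℝ} (hν : -1 < ν) (hx : 0 < x)
    (hroot : (x : ℂ) * deriv (besselI ν) (x : ℂ) - ((β * ν : ℝ) : ℂ) * besselI ν (x : ℂ) = 0) :
    2 * (∑' n : ℕ, (n:ℝ) * a ν n * (x^2)^n) = (β * ν - ν) * ∑' n : ℕ, a ν n * (x^2)^n := by
  have hx0 : (x:ℂ) ≠ 0 := by exact_mod_cast hx.ne'
  have hw : ((x:ℂ)/2) ≠ 0 := by simpa using hx0
  set t : ℝ := x^2 with ht
  set A : ℝ := ∑' n : ℕ, a ν n * t^n with hA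
  set B : ℝ := ∑' n : ℕ, (n:ℝ) * a ν n * t^n with hB
  have hGc : Gc ν (x:ℂ) = ((A : ℝ) : ℂ) := by
    rw [hA, ofReal_tsum]
    unfold Gc
    apply tsum_congr fun n => ?_
    rw [ht]
    push_cast
    rw [pow_mul]
  have hD : (x:ℂ) * (∑' n : ℕ, ((a ν n : ℝ) : ℂ) * (((2 * n : ℕ) : ℂ) * (x:ℂ) ^ (2 * n - 1)))
      = (((2 * B : ℝ)) : ℂ) := by
    rw [hB, ← tsum_mul_left (a := (x:ℂ)), show ((2 * ∑' n : ℕ, (n:ℝ) * a ν n * t^n : ℝ) : ℂ)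
      = ∑' n : ℕ, ((2 * ((n:ℝ) * a ν n * t^n) : ℝ) : ℂ) by
        rw [← ofReal_tsum, ← tsum_mul_left]]
    apply tsum_congr fun n => ?_
    match n with
    | 0 => norm_num
    | (m+1) =>
      have h1 : 2 * (m+1) - 1 = 2*m + 1 := by omega
      have h2 : (x:ℂ) ^ (2*m+1) * (x:ℂ) = (x:ℂ) ^ (2*(m+1)) := by
        ring
      rw [h1, ht]
      push_cast
      rw [← pow_mul, ← h2]
      ring
  have hGc' : (∑' n : ℕ, ((a ν n : ℝ) : ℂ) * (x:ℂ) ^ (2 * n)) = ((A : ℝ) : ℂ) := hGc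
  have hderiv := (besselI_hasDerivAt hν hx).deriv
  rw [hderiv, besselI_eq hν hx0, hGc, hGc'] at hroot
  have hcpow : (x:ℂ) * ((ν:ℂ) * ((x:ℂ)/2) ^ ((ν:ℂ)-1) * (1/2)) = (ν:ℂ) * ((x:ℂ)/2) ^ (ν:ℂ) := by
    rw [Complex.cpow_sub _ _ hw, Complex.cpow_one]
    field_simp
  have hmain : ((x:ℂ)/2) ^ (ν:ℂ) *
      ((ν:ℂ) * ((A:ℝ):ℂ) + ((2*B : ℝ):ℂ) - ((β*ν : ℝ):ℂ) * ((A:ℝ):ℂ)) = 0 := by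
    calc ((x:ℂ)/2) ^ (ν:ℂ) * ((ν:ℂ) * ((A:ℝ):ℂ) + ((2*B : ℝ):ℂ) - ((β*ν : ℝ):ℂ) * ((A:ℝ):ℂ))
        = (x:ℂ) * ((ν:ℂ) * ((x:ℂ)/2) ^ ((ν:ℂ)-1) * (1/2) * ((A:ℝ):ℂ) +
            ((x:ℂ)/2) ^ (ν:ℂ) *
              ∑' n : ℕ, ((a ν n : ℝ) : ℂ) * (((2 * n : ℕ) : ℂ) * (x:ℂ) ^ (2 * n - 1)))
          - ((β*ν : ℝ):ℂ) * (((x:ℂ)/2) ^ (ν:ℂ) * ((A:ℝ):ℂ)) := by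
          rw [← hD]
          linear_combination (-((A:ℝ):ℂ)) * hcpow
      _ = 0 := hroot
  have hwν : ((x:ℂ)/2) ^ (ν:ℂ) ≠ 0 := by
    intro h
    exact hw ((Complex.cpow_eq_zero_iff _ _).1 h).1
  have hinner := (mul_eq_zero.1 hmain).resolve_left hwν
  have : ((ν * A + 2*B - β*ν*A : ℝ) : ℂ) = 0 := by
    push_cast at hinner ⊢
    linear_combination hinner
  have hreal : ν * A + 2*B - β*ν*A = 0 := by exact_mod_cast this
  linarith

lemma jsq_gt {ν j₁ : ℝ} (hν : -1 < ν) (hj₁ : 0 < j₁) (hjzero : besselJ ν (j₁ : ℂ) = 0) :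
    4 * (ν + 1) < j₁ ^ 2 := by
  have h := besselJ_eq_real hν hj₁
  rw [hjzero] at h
  have hz : (j₁ : ℂ) ≠ 0 := by exact_mod_cast hj₁.ne'
  have hw : ((j₁:ℂ)/2) ≠ 0 := by simpa using hz
  have hwν : ((j₁:ℂ)/2) ^ (ν:ℂ) ≠ 0 := by
    intro hh
    exact hw ((Complex.cpow_eq_zero_iff _ _).1 hh).1
  have hP : (∑' n : ℕ, (-1:ℝ) ^ n * a ν n * (j₁^2) ^ n) = 0 := by
    have := (mul_eq_zero.1 h.symm).resolve_left hwν
    exact_mod_cast this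
  by_contra hle
  push_neg at hle
  have := P_pos hν (s := j₁^2) (by positivity) hle
  rw [hP] at this
  exact lt_irrefl 0 this

end SqRoot

/-- For `ν ∈ (-1,0)`, `0 ≤ β < 1`, and `x` a positive root of
`r I_ν'(r) - βν I_ν(r) = 0`, one has
`x² < (-ν(1-β)/(2 + ν(1-β))) j_{ν,1}² < j_{ν,1}²`; in particular `x < j_{ν,1}`. -/
theorem sq_root_lt_first_zero (ν β x j₁ : ℝ) (hν₁ : -1 < ν) (hν₀ : ν < 0)
    (hβ₀ : 0 ≤ β) (hβ₁ : β < 1) (hj₁ : 0 < j₁) (hjzero : besselJ ν (j₁ : ℂ) = 0)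
    (hjmin : ∀ t : ℝ, 0 < t → besselJ ν (t : ℂ) = 0 → j₁ ≤ t) (hx : 0 < x)
    (hroot : (x : ℂ) * deriv (besselI ν) (x : ℂ) - ((β * ν : ℝ) : ℂ) * besselI ν (x : ℂ) = 0) :
    x ^ 2 < (-(ν * (1 - β)) / (2 + ν * (1 - β))) * j₁ ^ 2 ∧
    (-(ν * (1 - β)) / (2 + ν * (1 - β))) * j₁ ^ 2 < j₁ ^ 2 ∧ x < j₁ := by
  open SqRoot in
  have hjsq : 4 * (ν + 1) < j₁ ^ 2 := jsq_gt hν₁ hj₁ hjzero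
  have hkey := SqRoot.key_eq hν₁ hx hroot
  set t : ℝ := x ^ 2 with ht
  have ht0 : 0 < t := by positivity
  set A : ℝ := ∑' n : ℕ, SqRoot.a ν n * t^n with hA
  set B : ℝ := ∑' n : ℕ, (n:ℝ) * SqRoot.a ν n * t^n with hB
  set c : ℝ := β * ν - ν with hc
  have hc0 : 0 < c := by nlinarith
  have hc1 : c < 1 := by nlinarith
  have hApos : 0 < A := by
    have h0 : SqRoot.a ν 0 * t ^ 0 ≤ A :=
      Summable.le_tsum (SqRoot.summable_A hν₁ ht0.le) 0
        (fun j _ => mul_nonneg (SqRoot.a_pos hν₁ j).le (pow_nonneg ht0.le j))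
    simpa using lt_of_lt_of_le (by simpa using SqRoot.a_pos hν₁ 0) h0
  have hB1 : SqRoot.a ν 1 * t ≤ B := by
    have h1 : ((1:ℕ):ℝ) * SqRoot.a ν 1 * t ^ 1 ≤ B :=
      Summable.le_tsum (SqRoot.summable_nA hν₁ ht0.le) 1
        (fun j _ => mul_nonneg (mul_nonneg (j.cast_nonneg) (SqRoot.a_pos hν₁ j).le)
          (pow_nonneg ht0.le j))
    simpa using h1
  have ha01 : SqRoot.a ν 0 = 4 * (ν + 1) * SqRoot.a ν 1 := by
    have := SqRoot.a_succ hν₁ 0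
    push_cast at this
    linarith [this]
  have hCsum : Summable (fun n : ℕ => ((n:ℝ) - 1) * SqRoot.a ν n * t ^ n) := by
    have := (SqRoot.summable_nA hν₁ ht0.le).sub (SqRoot.summable_A hν₁ ht0.le)
    convert this using 2 with n
    rfl
    ring
  have hBA : B - A = ∑' n : ℕ, ((n:ℝ) - 1) * SqRoot.a ν n * t ^ n := by
    rw [hB, hA, ← Summable.tsum_sub (SqRoot.summable_nA hν₁ ht0.le) (SqRoot.summable_A hν₁ ht0.le)]
    exact tsum_congr fun n => by ring
  have hC : -(SqRoot.a ν 0) ≤ B - A := by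
    rw [hBA, Summable.tsum_eq_zero_add hCsum]
    have h1 : ((0:ℕ):ℝ) - 1 = -1 := by norm_num
    have h2 : 0 ≤ ∑' n : ℕ, (((n+1:ℕ):ℝ) - 1) * SqRoot.a ν (n+1) * t ^ (n+1) := by
      apply tsum_nonneg fun n => ?_
      have : (0:ℝ) ≤ ((n+1:ℕ):ℝ) - 1 := by push_cast; linarith [n.cast_nonneg (α := ℝ)]
      exact mul_nonneg (mul_nonneg this (SqRoot.a_pos hν₁ _).le) (pow_nonneg ht0.le _)
    simp only [h1]
    nlinarith
  have hstep : t * A < (j₁^2 + t) * B := by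
    have hj0 : 0 < j₁ ^ 2 := by positivity
    have h4 : 0 < 4 * (ν + 1) := by linarith
    have ha1t : 0 < SqRoot.a ν 1 * t := mul_pos (SqRoot.a_pos hν₁ 1) ht0
    have h1 : SqRoot.a ν 0 * t < j₁^2 * B :=
      calc SqRoot.a ν 0 * t = 4 * (ν+1) * (SqRoot.a ν 1 * t) := by rw [ha01]; ring
        _ < j₁^2 * (SqRoot.a ν 1 * t) := by exact mul_lt_mul_of_pos_right hjsq ha1t
        _ ≤ j₁^2 * B := mul_le_mul_of_nonneg_left hB1 hj0.le
    have h2 : t * (B - A) ≥ t * (-(SqRoot.a ν 0)) := mul_le_mul_of_nonneg_left hC ht0.le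
    nlinarith
  have hmain : c * (j₁^2 + t) > 2 * t := by
    have h2 : c * (j₁^2 + t) * A > 2 * t * A := by
      calc c * (j₁^2 + t) * A = (j₁^2 + t) * (c * A) := by ring
        _ = (j₁^2 + t) * (2 * B) := by rw [← hkey]
        _ > 2 * (t * A) := by nlinarith [hstep, ht0, hApos]
        _ = 2 * t * A := by ring
    exact lt_of_mul_lt_mul_right (by linarith) hApos.le
  have hc2 : (0:ℝ) < 2 - c := by linarith
  have hrw1 : -(ν * (1 - β)) = c := by rw [hc]; ring
  have hrw2 : 2 + ν * (1 - β) = 2 - c := by rw [hc]; ring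
  rw [hrw1, hrw2]
  have hg1 : t < c / (2 - c) * j₁ ^ 2 := by
    rw [div_mul_eq_mul_div, lt_div_iff₀ hc2]
    nlinarith
  have hg2 : c / (2 - c) * j₁ ^ 2 < j₁ ^ 2 := by
    have : c / (2 - c) < 1 := by rw [div_lt_one hc2]; linarith
    nlinarith [sq_nonneg j₁, hj₁]
  refine ⟨hg1, hg2, ?_⟩
  have : x ^ 2 < j₁ ^ 2 := lt_trans hg1 hg2
  exact lt_of_pow_lt_pow_left₀ 2 hj₁.le this
end

section
/- Let ν ∈ (−1,0) and 0 ≤ β < 1. Then the equation r I_ν'(r) − βν I_ν(r) = 0 has exactly one root r in (0,∞). Moreover, the function q_ν(r) = r I_ν'(r)/I_ν(r) − βν is strictly increasing on (0,∞), tends to ν(1−β) < 0 as r → 0⁺, and tends to +∞ as r → ∞. -/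
open Complex

section PS
variable {𝕜 : Type*} [NontriviallyNormedField 𝕜] [IsRCLikeNormedField 𝕜] [CompleteSpace 𝕜] [NormedSpace ℝ 𝕜]

lemma ps_summable (d : ℕ → 𝕜) {K B : ℝ} (hB : 0 ≤ B)
    (hd : ∀ n, ‖d n‖ ≤ K * B ^ n / n.factorial)
    (x : 𝕜) : Summable (fun n => d n * x ^ n) := by
  apply Summable.of_norm_bounded (g := fun n => K * (B * ‖x‖) ^ n / n.factorial)
  · exact ((Real.summable_pow_div_factorial (B * ‖x‖)).mul_left K).congr (fun n => by ring)
  · intro n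
    rw [norm_mul, norm_pow]
    have h1 : ‖d n‖ * ‖x‖ ^ n ≤ (K * B ^ n / n.factorial) * ‖x‖ ^ n :=
      mul_le_mul_of_nonneg_right (hd n) (by positivity)
    calc ‖d n‖ * ‖x‖ ^ n ≤ (K * B ^ n / n.factorial) * ‖x‖ ^ n := h1
      _ = K * (B * ‖x‖) ^ n / n.factorial := by rw [mul_pow]; ring

lemma ps_hasDerivAt (d : ℕ → 𝕜) {K B : ℝ} (hB : 1 ≤ B)
    (hd : ∀ n, ‖d n‖ ≤ K * B ^ n / n.factorial) (z : 𝕜) :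
    HasDerivAt (fun w : 𝕜 => ∑' n, d n * w ^ n)
      (∑' n : ℕ, ((n : 𝕜) + 1) * d (n + 1) * z ^ n) z := by
  have hK : 0 ≤ K := by
    have := (norm_nonneg (d 0)).trans (hd 0)
    simpa using this
  set R : ℝ := ‖z‖ + 1 with hRdef
  have hR1 : 1 ≤ R := by have := norm_nonneg z; rw [hRdef]; linarith
  have hR0 : 0 < R := lt_of_lt_of_le one_pos hR1
  set u : ℕ → ℝ := fun n => K * (2 * B * R) ^ n / n.factorial with hu_def
  have hu : Summable u :=
    ((Real.summable_pow_div_factorial (2 * B * R)).mul_left K).congr (fun n => by ring)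
  have key : ∀ (n : ℕ) (y : 𝕜), y ∈ Metric.ball (0 : 𝕜) R →
      ‖d n * ((n : 𝕜) * y ^ (n - 1))‖ ≤ u n := by
    intro n y hy
    have hyR : ‖y‖ ≤ R := by
      have := Metric.mem_ball.1 hy
      rw [dist_zero_right] at this
      exact this.le
    have hn2 : (n : ℝ) ≤ 2 ^ n := Nat.cast_le.2 (Nat.lt_two_pow_self (n := n)).le |>.trans_eq (by push_cast; ring)
    have hnorm_n : ‖((n : 𝕜))‖ ≤ (n : ℝ) := by
      simpa using (Nat.norm_cast_le (α := 𝕜) n)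
    have hyn : ‖y‖ ^ (n - 1) ≤ R ^ n := by
      calc ‖y‖ ^ (n - 1) ≤ R ^ (n - 1) := pow_le_pow_left₀ (norm_nonneg y) hyR _
        _ ≤ R ^ n := pow_le_pow_right₀ hR1 (Nat.sub_le n 1)
    rw [norm_mul, norm_mul, norm_pow]
    calc ‖d n‖ * (‖(n : 𝕜)‖ * ‖y‖ ^ (n - 1))
        ≤ (K * B ^ n / n.factorial) * ((n : ℝ) * R ^ n) := by
          apply mul_le_mul (hd n) _ (by positivity) (by positivity)
          exact mul_le_mul hnorm_n hyn (by positivity) (Nat.cast_nonneg n)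
      _ ≤ (K * B ^ n / n.factorial) * (2 ^ n * R ^ n) := by
          apply mul_le_mul_of_nonneg_left _ (by positivity)
          exact mul_le_mul_of_nonneg_right hn2 (by positivity)
      _ = u n := by
          simp only [hu_def]
          have h : (2 * B * R) ^ n = 2 ^ n * B ^ n * R ^ n := by rw [mul_pow, mul_pow]
          rw [h]; ring
  have hball : (z : 𝕜) ∈ Metric.ball (0 : 𝕜) R := by
    rw [Metric.mem_ball, dist_zero_right]; simp [hRdef]
  have h0 : (0 : 𝕜) ∈ Metric.ball (0 : 𝕜) R := by
    rw [Metric.mem_ball, dist_zero_right]; simpa using hR0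
  have hsum0 : Summable (fun n => d n * (0 : 𝕜) ^ n) := by
    apply summable_of_ne_finset_zero (s := {0})
    intro n hn
    simp only [Finset.mem_singleton] at hn
    rw [zero_pow hn, mul_zero]
  have main := hasDerivAt_tsum_of_isPreconnected hu Metric.isOpen_ball
    (convex_ball (0 : 𝕜) R).isPreconnected
    (fun n y _ => (hasDerivAt_pow n y).const_mul (d n)) key h0 hsum0 hball
  have hs : Summable (fun n => d n * ((n : 𝕜) * z ^ (n - 1))) :=
    Summable.of_norm_bounded hu (fun n => key n z hball)
  refine main.congr_deriv (Eq.symm ?_)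
  rw [Summable.tsum_eq_zero_add hs]
  simp only [Nat.cast_zero, zero_mul, mul_zero, zero_add]
  apply tsum_congr
  intro n
  push_cast
  ring
end PS

section PS2
variable {𝕜 : Type*} [NontriviallyNormedField 𝕜] [CompleteSpace 𝕜]

lemma ps_shift (d : ℕ → 𝕜) {x : 𝕜} (hx : x ≠ 0)
    (h : Summable fun n : ℕ => (n : 𝕜) * d n * x ^ n) :
    x * ∑' n : ℕ, ((n : 𝕜) + 1) * d (n + 1) * x ^ n = ∑' n : ℕ, (n : 𝕜) * d n * x ^ n := by
  have h1 : Summable (fun n : ℕ => ((n : 𝕜) + 1) * d (n + 1) * x ^ (n + 1)) := by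
    have := (summable_nat_add_iff 1).2 h
    apply this.congr
    intro n; push_cast; ring
  have h2 : Summable (fun n : ℕ => ((n : 𝕜) + 1) * d (n + 1) * x ^ n) := by
    have := h1.mul_right x⁻¹
    apply this.congr
    intro n
    field_simp [pow_succ]
    ring
  rw [← tsum_mul_left]
  rw [Summable.tsum_eq_zero_add h]
  simp only [Nat.cast_zero, zero_mul, zero_add]
  apply tsum_congr
  intro n
  push_cast
  ring
end PS2

noncomputable def bc (ν : ℝ) (n : ℕ) : ℝ := 1 / (n.factorial * Real.Gamma (n + ν + 1))

lemma bc_pos {ν : ℝ} (hν : -1 < ν) (n : ℕ) : 0 < bc ν n := by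
  have hg : 0 < Real.Gamma (n + ν + 1) := by
    apply Real.Gamma_pos_of_pos
    have : (0:ℝ) ≤ n := Nat.cast_nonneg n
    linarith
  have hf : (0:ℝ) < n.factorial := by exact_mod_cast n.factorial_pos
  exact div_pos one_pos (mul_pos hf hg)

lemma bc_bound {ν : ℝ} (hν : -1 < ν) :
    ∃ K : ℝ, 0 < K ∧ ∀ n : ℕ, bc ν n ≤ K * 1 ^ n / n.factorial := by
  have hg1 : 0 < Real.Gamma (ν + 1) := Real.Gamma_pos_of_pos (by linarith)
  have hg2 : 0 < Real.Gamma (ν + 2) := Real.Gamma_pos_of_pos (by linarith)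
  refine ⟨max (1 / Real.Gamma (ν + 1)) (1 / Real.Gamma (ν + 2)),
    lt_max_of_lt_left (by positivity), ?_⟩
  have key : ∀ m : ℕ, Real.Gamma (ν + 2) ≤ Real.Gamma ((m + 1 : ℕ) + ν + 1) := by
    intro m
    induction m with
    | zero =>
      rw [show ((0:ℕ)+1:ℕ) = 1 from rfl, show ((1:ℕ):ℝ) + ν + 1 = ν + 2 by push_cast; ring]
    | succ k ih =>
      have harg : (0:ℝ) < (k + 1 : ℕ) + ν + 1 := by
        have : (0:ℝ) ≤ (k+1 : ℕ) := Nat.cast_nonneg _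
        linarith
      have heq : ((k + 2 : ℕ) : ℝ) + ν + 1 = ((k + 1 : ℕ) + ν + 1) + 1 := by push_cast; ring
      rw [heq, Real.Gamma_add_one (ne_of_gt harg)]
      have hfac : (1:ℝ) ≤ (k + 1 : ℕ) + ν + 1 := by
        have : (0:ℝ) ≤ (k : ℕ) := Nat.cast_nonneg _
        push_cast
        linarith
      calc Real.Gamma (ν + 2) ≤ Real.Gamma ((k+1 : ℕ) + ν + 1) := ih
        _ ≤ ((k+1 : ℕ) + ν + 1) * Real.Gamma ((k+1 : ℕ) + ν + 1) := by
            apply le_mul_of_one_le_left (le_of_lt (Real.Gamma_pos_of_pos harg)) hfac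
  intro n
  have hf : (0:ℝ) < n.factorial := by exact_mod_cast n.factorial_pos
  have hgn : 0 < Real.Gamma (n + ν + 1) := by
    apply Real.Gamma_pos_of_pos
    have : (0:ℝ) ≤ n := Nat.cast_nonneg n
    linarith
  rw [bc, one_pow, mul_one, div_le_div_iff₀ (mul_pos hf hgn) hf, one_mul]
  have h1 : (1:ℝ) ≤ (max (1 / Real.Gamma (ν + 1)) (1 / Real.Gamma (ν + 2))) * Real.Gamma (n + ν + 1) := by
    cases n with
    | zero =>
      rw [show ((0:ℕ):ℝ) + ν + 1 = ν + 1 by push_cast; ring]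
      calc (1:ℝ) = (1 / Real.Gamma (ν+1)) * Real.Gamma (ν+1) := by field_simp
        _ ≤ _ := mul_le_mul_of_nonneg_right (le_max_left _ _) (le_of_lt hg1)
    | succ m =>
      calc (1:ℝ) = (1 / Real.Gamma (ν+2)) * Real.Gamma (ν+2) := by field_simp
        _ ≤ _ := mul_le_mul (le_max_right _ _) (key m) (le_of_lt hg2) (by positivity)
  calc ((n.factorial : ℝ)) = 1 * n.factorial := (one_mul _).symm
    _ ≤ ((max (1 / Real.Gamma (ν + 1)) (1 / Real.Gamma (ν + 2))) * Real.Gamma (n + ν + 1)) * n.factorial :=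
        mul_le_mul_of_nonneg_right h1 (le_of_lt hf)
    _ = _ := by ring

noncomputable def SSb (ν : ℝ) (x : ℝ) : ℝ := ∑' n : ℕ, bc ν n * x ^ n
noncomputable def TTb (ν : ℝ) (x : ℝ) : ℝ := ∑' n : ℕ, (n : ℝ) * bc ν n * x ^ n
noncomputable def UUb (ν : ℝ) (x : ℝ) : ℝ := ∑' n : ℕ, (n : ℝ) * ((n : ℝ) * bc ν n) * x ^ n
noncomputable def DSb (ν : ℝ) (x : ℝ) : ℝ := ∑' n : ℕ, ((n : ℝ) + 1) * bc ν (n + 1) * x ^ n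
noncomputable def DTb (ν : ℝ) (x : ℝ) : ℝ :=
  ∑' n : ℕ, ((n : ℝ) + 1) * (((n : ℝ) + 1) * bc ν (n + 1)) * x ^ n
noncomputable def ECb (ν : ℝ) (w : ℂ) : ℂ := ∑' n : ℕ, (bc ν n : ℂ) * w ^ n
noncomputable def DCb (ν : ℝ) (w : ℂ) : ℂ := ∑' n : ℕ, ((n : ℂ) + 1) * (bc ν (n + 1) : ℂ) * w ^ n

section series
variable {ν : ℝ} (hν : -1 < ν)
include hν

lemma bc_abs_bound : ∃ K : ℝ, 0 < K ∧ (∀ n : ℕ, |bc ν n| ≤ K * 1 ^ n / n.factorial) ∧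
    (∀ n : ℕ, |(n : ℝ) * bc ν n| ≤ K * 2 ^ n / n.factorial) ∧
    (∀ n : ℕ, |(n : ℝ) * ((n : ℝ) * bc ν n)| ≤ K * 4 ^ n / n.factorial) := by
  obtain ⟨K, hK, hb⟩ := bc_bound hν
  have habs : ∀ n : ℕ, |bc ν n| = bc ν n := fun n => abs_of_pos (bc_pos hν n)
  have hn2 : ∀ n : ℕ, (n : ℝ) ≤ 2 ^ n := by
    intro n
    exact_mod_cast (Nat.lt_two_pow_self (n := n)).le
  have hfpos : ∀ n : ℕ, (0:ℝ) < n.factorial := fun n => by exact_mod_cast n.factorial_pos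
  refine ⟨K, hK, ?_, ?_, ?_⟩
  · intro n; rw [habs]; exact hb n
  · intro n
    rw [abs_mul, habs, Nat.abs_cast]
    calc (n:ℝ) * bc ν n ≤ 2 ^ n * (K * 1 ^ n / n.factorial) := by
          apply mul_le_mul (hn2 n) (hb n) (le_of_lt (bc_pos hν n)) (by positivity)
      _ = K * 2 ^ n / n.factorial := by rw [one_pow]; ring
  · intro n
    rw [abs_mul, abs_mul, habs, Nat.abs_cast]
    calc (n:ℝ) * ((n:ℝ) * bc ν n) = ((n:ℝ) * (n:ℝ)) * bc ν n := by ring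
      _ ≤ (2^n * 2^n) * (K * 1 ^ n / n.factorial) :=
          mul_le_mul (mul_le_mul (hn2 n) (hn2 n) (Nat.cast_nonneg n) (by positivity)) (hb n)
            (le_of_lt (bc_pos hν n)) (by positivity)
      _ = K * 4 ^ n / n.factorial := by
          rw [one_pow, show ((4:ℝ) ^ n) = 2^n * 2^n by rw [← mul_pow]; norm_num]
          ring

lemma summable_SSb (x : ℝ) : Summable fun n : ℕ => bc ν n * x ^ n := by
  obtain ⟨K, hK, h1, _, _⟩ := bc_abs_bound hν
  exact ps_summable (K:=K) (B:=1) _ (by norm_num) (fun n => by rw [Real.norm_eq_abs]; exact h1 n) x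

lemma summable_TTb (x : ℝ) : Summable fun n : ℕ => (n : ℝ) * bc ν n * x ^ n := by
  obtain ⟨K, hK, _, h2, _⟩ := bc_abs_bound hν
  exact ps_summable (K:=K) (B:=2) _ (by norm_num) (fun n => by rw [Real.norm_eq_abs]; exact h2 n) x

lemma summable_UUb (x : ℝ) : Summable fun n : ℕ => (n : ℝ) * ((n : ℝ) * bc ν n) * x ^ n := by
  obtain ⟨K, hK, _, _, h3⟩ := bc_abs_bound hν
  exact ps_summable (K:=K) (B:=4) _ (by norm_num) (fun n => by rw [Real.norm_eq_abs]; exact h3 n) x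

lemma hasDerivAt_SSb (x : ℝ) : HasDerivAt (SSb ν) (DSb ν x) x := by
  obtain ⟨K, hK, h1, _, _⟩ := bc_abs_bound hν
  have := ps_hasDerivAt (K:=K) (B:=1) (bc ν) (le_refl 1) (fun n => by rw [Real.norm_eq_abs]; exact h1 n) x
  exact this

lemma hasDerivAt_TTb (x : ℝ) : HasDerivAt (TTb ν) (DTb ν x) x := by
  obtain ⟨K, hK, _, h2, _⟩ := bc_abs_bound hν
  have := ps_hasDerivAt (K:=K) (B:=2) (fun n => (n : ℝ) * bc ν n) (by norm_num)
    (fun n => by rw [Real.norm_eq_abs]; exact h2 n) x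
  exact this.congr_deriv (tsum_congr fun n => by push_cast; ring)

lemma relT {x : ℝ} (hx : x ≠ 0) : x * DSb ν x = TTb ν x :=
  ps_shift (bc ν) hx (summable_TTb hν x)

lemma relU {x : ℝ} (hx : x ≠ 0) : x * DTb ν x = UUb ν x := by
  have h := ps_shift (fun n => (n : ℝ) * bc ν n) hx (summable_UUb hν x)
  have h2 : DTb ν x = ∑' n : ℕ, ((n:ℝ) + 1) * ((((n+1:ℕ)):ℝ) * bc ν (n+1)) * x ^ n := by
    apply tsum_congr; intro n; push_cast; ring
  rw [UUb, h2]
  exact h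

lemma hasDerivAt_ECb (w : ℂ) : HasDerivAt (ECb ν) (DCb ν w) w := by
  obtain ⟨K, hK, h1, _, _⟩ := bc_abs_bound hν
  have := ps_hasDerivAt (K:=K) (B:=1) (fun n => ((bc ν n : ℝ) : ℂ)) (le_refl 1)
    (fun n => by rw [Complex.norm_real, Real.norm_eq_abs]; exact h1 n) w
  exact this

lemma ECb_ofReal (x : ℝ) : ECb ν (x : ℂ) = ((SSb ν x : ℝ) : ℂ) := by
  rw [SSb, Complex.ofReal_tsum]
  apply tsum_congr; intro n; push_cast; ring

lemma DCb_ofReal (x : ℝ) : DCb ν (x : ℂ) = ((DSb ν x : ℝ) : ℂ) := by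
  rw [DSb, Complex.ofReal_tsum]
  apply tsum_congr; intro n; push_cast; ring

lemma SSb_pos {x : ℝ} (hx : 0 ≤ x) : 0 < SSb ν x := by
  have h0 : bc ν 0 * x ^ 0 = bc ν 0 := by simp
  calc (0:ℝ) < bc ν 0 := bc_pos hν 0
    _ = bc ν 0 * x ^ 0 := h0.symm
    _ ≤ SSb ν x := Summable.le_tsum (summable_SSb hν x) 0
        (fun j _ => mul_nonneg (le_of_lt (bc_pos hν j)) (pow_nonneg hx j))

lemma TTb_nonneg {x : ℝ} (hx : 0 ≤ x) : 0 ≤ TTb ν x :=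
  tsum_nonneg fun n => mul_nonneg
    (mul_nonneg (Nat.cast_nonneg n) (le_of_lt (bc_pos hν n))) (pow_nonneg hx n)

end series

section cs
variable {ν : ℝ} (hν : -1 < ν)
include hν

set_option maxHeartbeats 1000000 in
lemma cs_ineq {x : ℝ} (hx : 0 < x) : TTb ν x ^ 2 < SSb ν x * UUb ν x := by
  have hapos : ∀ n : ℕ, 0 < bc ν n * x ^ n := fun n => mul_pos (bc_pos hν n) (pow_pos hx n)
  have hS : Summable (fun n : ℕ => bc ν n * x ^ n) := summable_SSb hν x
  have hT : Summable (fun n : ℕ => (n:ℝ) * bc ν n * x ^ n) := summable_TTb hν x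
  have hU : Summable (fun n : ℕ => (n:ℝ) * ((n:ℝ) * bc ν n) * x ^ n) := summable_UUb hν x
  have hTnn : ∀ n : ℕ, 0 ≤ (n:ℝ) * bc ν n * x ^ n := fun n =>
    mul_nonneg (mul_nonneg (Nat.cast_nonneg n) (bc_pos hν n).le) (pow_pos hx n).le
  have hUnn : ∀ n : ℕ, 0 ≤ (n:ℝ) * ((n:ℝ) * bc ν n) * x ^ n := fun n =>
    mul_nonneg (mul_nonneg (Nat.cast_nonneg n)
      (mul_nonneg (Nat.cast_nonneg n) (bc_pos hν n).le)) (pow_pos hx n).le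
  have hSn : Summable (fun n : ℕ => ‖bc ν n * x ^ n‖) := by
    apply hS.congr; intro n; rw [Real.norm_eq_abs, _root_.abs_of_nonneg (hapos n).le]
  have hTn : Summable (fun n : ℕ => ‖(n:ℝ) * bc ν n * x ^ n‖) := by
    apply hT.congr; intro n; rw [Real.norm_eq_abs, _root_.abs_of_nonneg (hTnn n)]
  have hUn : Summable (fun n : ℕ => ‖(n:ℝ) * ((n:ℝ) * bc ν n) * x ^ n‖) := by
    apply hU.congr; intro n; rw [Real.norm_eq_abs, _root_.abs_of_nonneg (hUnn n)]
  have hSU : SSb ν x * UUb ν x =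
      ∑' p : ℕ × ℕ, (bc ν p.1 * x ^ p.1) * ((p.2:ℝ) * ((p.2:ℝ) * bc ν p.2) * x ^ p.2) :=
    tsum_mul_tsum_of_summable_norm hSn hUn
  have hUS : SSb ν x * UUb ν x =
      ∑' p : ℕ × ℕ, ((p.1:ℝ) * ((p.1:ℝ) * bc ν p.1) * x ^ p.1) * (bc ν p.2 * x ^ p.2) := by
    rw [mul_comm]; exact tsum_mul_tsum_of_summable_norm hUn hSn
  have hTT : TTb ν x * TTb ν x =
      ∑' p : ℕ × ℕ, ((p.1:ℝ) * bc ν p.1 * x ^ p.1) * ((p.2:ℝ) * bc ν p.2 * x ^ p.2) :=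
    tsum_mul_tsum_of_summable_norm hTn hTn
  have sSU : Summable (fun p : ℕ × ℕ =>
      (bc ν p.1 * x ^ p.1) * ((p.2:ℝ) * ((p.2:ℝ) * bc ν p.2) * x ^ p.2)) :=
    hS.mul_of_nonneg hU (fun n => (hapos n).le) hUnn
  have sUS : Summable (fun p : ℕ × ℕ =>
      ((p.1:ℝ) * ((p.1:ℝ) * bc ν p.1) * x ^ p.1) * (bc ν p.2 * x ^ p.2)) :=
    hU.mul_of_nonneg hS hUnn (fun n => (hapos n).le)
  have sTT : Summable (fun p : ℕ × ℕ =>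
      ((p.1:ℝ) * bc ν p.1 * x ^ p.1) * ((p.2:ℝ) * bc ν p.2 * x ^ p.2)) :=
    hT.mul_of_nonneg hT hTnn hTnn
  set F : ℕ × ℕ → ℝ := fun p =>
    ((p.1:ℝ) - (p.2:ℝ))^2 * ((bc ν p.1 * x ^ p.1) * (bc ν p.2 * x ^ p.2)) with hFdef
  have hFeq : ∀ p : ℕ × ℕ, F p =
      ((p.1:ℝ) * ((p.1:ℝ) * bc ν p.1) * x ^ p.1) * (bc ν p.2 * x ^ p.2)
      - 2 * (((p.1:ℝ) * bc ν p.1 * x ^ p.1) * ((p.2:ℝ) * bc ν p.2 * x ^ p.2))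
      + (bc ν p.1 * x ^ p.1) * ((p.2:ℝ) * ((p.2:ℝ) * bc ν p.2) * x ^ p.2) := by
    intro p; simp only [hFdef]; ring
  have hFsummable : Summable F := by
    apply Summable.congr ((sUS.sub (sTT.mul_left 2)).add sSU)
    intro p; exact (hFeq p).symm
  have hFtsum : ∑' p, F p = 2 * (SSb ν x * UUb ν x - TTb ν x * TTb ν x) := by
    calc ∑' p, F p = ∑' p : ℕ × ℕ,
        (((p.1:ℝ) * ((p.1:ℝ) * bc ν p.1) * x ^ p.1) * (bc ν p.2 * x ^ p.2)
        - 2 * (((p.1:ℝ) * bc ν p.1 * x ^ p.1) * ((p.2:ℝ) * bc ν p.2 * x ^ p.2))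
        + (bc ν p.1 * x ^ p.1) * ((p.2:ℝ) * ((p.2:ℝ) * bc ν p.2) * x ^ p.2)) :=
          tsum_congr hFeq
      _ = 2 * (SSb ν x * UUb ν x - TTb ν x * TTb ν x) := by
          rw [Summable.tsum_add (sUS.sub (sTT.mul_left 2)) sSU,
            Summable.tsum_sub sUS (sTT.mul_left 2), tsum_mul_left, ← hSU, ← hUS, ← hTT]
          ring
  have hsfin : F (0,1) + F (1,0) ≤ ∑' p, F p := by
    have : ∑ p ∈ ({(0,1),(1,0)} : Finset (ℕ × ℕ)), F p ≤ ∑' p, F p := by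
      apply Summable.sum_le_tsum _ _ hFsummable
      intro p _
      apply mul_nonneg (sq_nonneg _) (mul_nonneg (hapos _).le (hapos _).le)
    simpa using this
  have hpos : 0 < F (0,1) + F (1,0) := by
    have h01 : F (0,1) = (bc ν 0 * x ^ 0) * (bc ν 1 * x ^ 1) := by
      simp only [hFdef]; norm_num
    have h10 : F (1,0) = (bc ν 1 * x ^ 1) * (bc ν 0 * x ^ 0) := by
      simp only [hFdef]; norm_num
    rw [h01, h10]
    have := mul_pos (hapos 0) (hapos 1)
    nlinarith
  have hfinal : 0 < ∑' p, F p := lt_of_lt_of_le hpos hsfin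
  rw [hFtsum] at hfinal
  nlinarith
end cs

noncomputable def phib (ν : ℝ) (x : ℝ) : ℝ := TTb ν x / SSb ν x

section phi
variable {ν : ℝ} (hν : -1 < ν)
include hν

lemma hasDerivAt_phib {x : ℝ} (hx : 0 < x) :
    HasDerivAt (phib ν)
      ((DTb ν x * SSb ν x - TTb ν x * DSb ν x) / (SSb ν x) ^ 2) x :=
  (hasDerivAt_TTb hν x).div (hasDerivAt_SSb hν x) (SSb_pos hν hx.le).ne'

lemma phib_deriv_pos {x : ℝ} (hx : 0 < x) :
    0 < (DTb ν x * SSb ν x - TTb ν x * DSb ν x) / (SSb ν x) ^ 2 := by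
  apply div_pos _ (pow_pos (SSb_pos hν hx.le) 2)
  have h1 : x * (DTb ν x * SSb ν x - TTb ν x * DSb ν x)
      = UUb ν x * SSb ν x - TTb ν x * TTb ν x := by
    rw [mul_sub, ← mul_assoc, ← mul_assoc, relU hν hx.ne', mul_comm x (TTb ν x),
      mul_assoc, relT hν hx.ne']
  have h2 := cs_ineq hν hx
  nlinarith [SSb_pos hν hx.le]

lemma phib_strictMono : StrictMonoOn (phib ν) (Set.Ioi 0) := by
  apply strictMonoOn_of_deriv_pos (convex_Ioi 0)
  · intro x hx
    exact ((hasDerivAt_phib hν hx).continuousAt).continuousWithinAt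
  · intro x hx
    rw [interior_Ioi] at hx
    rw [(hasDerivAt_phib hν hx).deriv]
    exact phib_deriv_pos hν hx

lemma TTb_zero : TTb ν 0 = 0 := by
  rw [TTb]
  convert tsum_zero with n
  rcases n with _ | m
  · simp
  · simp [zero_pow]

lemma phib_cont_zero : Filter.Tendsto (phib ν) (nhds 0) (nhds 0) := by
  have hT := (hasDerivAt_TTb hν 0).continuousAt
  have hS := (hasDerivAt_SSb hν 0).continuousAt
  have : ContinuousAt (phib ν) 0 := hT.div hS (SSb_pos hν le_rfl).ne'
  have h0 : phib ν 0 = 0 := by rw [phib, TTb_zero hν, zero_div]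
  simpa [h0] using this.tendsto

set_option maxHeartbeats 1000000 in
lemma phib_atTop : Filter.Tendsto (phib ν) Filter.atTop Filter.atTop := by
  rw [Filter.tendsto_atTop]
  intro M
  obtain ⟨N, hN⟩ := exists_nat_ge M
  set C : ℝ := ∑ i ∈ Finset.range (N + 1), bc ν i with hC
  have hCpos : 0 < C := by
    rw [hC]
    apply Finset.sum_pos (fun i _ => bc_pos hν i)
    simp
  set b : ℝ := bc ν (N + 1) with hb
  have hbpos : 0 < b := bc_pos hν (N + 1)
  rw [Filter.eventually_atTop]
  refine ⟨max 1 ((N + 1) * C / b + 1), ?_⟩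
  intro x hx
  have hx1 : (1:ℝ) ≤ x := le_trans (le_max_left _ _) hx
  have hx0 : 0 < x := lt_of_lt_of_le one_pos hx1
  have hxb : (N + 1) * C ≤ b * x := by
    have h1 : (N + 1) * C / b + 1 ≤ x := le_trans (le_max_right _ _) hx
    rw [div_add' _ _ _ hbpos.ne'] at h1
    rw [div_le_iff₀ hbpos] at h1
    nlinarith
  have hS : 0 < SSb ν x := SSb_pos hν hx0.le
  -- P ≤ C * x ^ N
  have hP : ∑ i ∈ Finset.range (N + 1), bc ν i * x ^ i ≤ C * x ^ N := by
    rw [hC, Finset.sum_mul]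
    apply Finset.sum_le_sum
    intro i hi
    apply mul_le_mul_of_nonneg_left _ (bc_pos hν i).le
    exact pow_le_pow_right₀ hx1 (Nat.lt_succ_iff.1 (Finset.mem_range.1 hi))
  -- decomposition of SSb
  have hdecS : ∑ i ∈ Finset.range (N + 1), bc ν i * x ^ i
      + ∑' i : ℕ, bc ν (i + (N + 1)) * x ^ (i + (N + 1)) = SSb ν x :=
    Summable.sum_add_tsum_nat_add (f := fun n : ℕ => bc ν n * x ^ n) (N + 1) (summable_SSb hν x)
  have htails : Summable (fun i : ℕ => bc ν (i + (N + 1)) * x ^ (i + (N + 1))) :=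
    ((summable_nat_add_iff (f := fun n : ℕ => bc ν n * x ^ n) (N + 1)).2 (summable_SSb hν x))
  have htailt : Summable (fun i : ℕ => ((i + (N + 1) : ℕ) : ℝ) * bc ν (i + (N + 1)) * x ^ (i + (N + 1))) :=
    ((summable_nat_add_iff (f := fun n : ℕ => (n:ℝ) * bc ν n * x ^ n) (N + 1)).2 (summable_TTb hν x))
  -- T ≥ (N+1) * tail
  have hT1 : ((N:ℝ) + 1) * ∑' i : ℕ, bc ν (i + (N + 1)) * x ^ (i + (N + 1)) ≤ TTb ν x := by
    have hdecT : ∑ i ∈ Finset.range (N + 1), (i : ℝ) * bc ν i * x ^ i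
        + ∑' i : ℕ, ((i + (N + 1) : ℕ) : ℝ) * bc ν (i + (N + 1)) * x ^ (i + (N + 1)) = TTb ν x :=
      Summable.sum_add_tsum_nat_add (f := fun n : ℕ => (n:ℝ) * bc ν n * x ^ n) (N + 1) (summable_TTb hν x)
    have hfin : 0 ≤ ∑ i ∈ Finset.range (N + 1), (i : ℝ) * bc ν i * x ^ i :=
      Finset.sum_nonneg fun i _ => mul_nonneg (mul_nonneg (Nat.cast_nonneg i)
        (bc_pos hν i).le) (pow_pos hx0 i).le
    have hterm : ∀ i : ℕ, ((N:ℝ) + 1) * (bc ν (i + (N + 1)) * x ^ (i + (N + 1)))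
        ≤ ((i + (N + 1) : ℕ) : ℝ) * bc ν (i + (N + 1)) * x ^ (i + (N + 1)) := by
      intro i
      have : ((N:ℝ) + 1) ≤ ((i + (N + 1) : ℕ) : ℝ) := by push_cast; linarith [Nat.cast_nonneg (α := ℝ) i]
      have hnn : 0 ≤ bc ν (i + (N + 1)) * x ^ (i + (N + 1)) :=
        mul_nonneg (bc_pos hν _).le (pow_pos hx0 _).le
      calc ((N:ℝ) + 1) * (bc ν (i + (N + 1)) * x ^ (i + (N + 1)))
          ≤ ((i + (N + 1) : ℕ) : ℝ) * (bc ν (i + (N + 1)) * x ^ (i + (N + 1))) :=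
            mul_le_mul_of_nonneg_right this hnn
        _ = _ := by ring
    calc ((N:ℝ) + 1) * ∑' i : ℕ, bc ν (i + (N + 1)) * x ^ (i + (N + 1))
        = ∑' i : ℕ, ((N:ℝ) + 1) * (bc ν (i + (N + 1)) * x ^ (i + (N + 1))) := by
          rw [tsum_mul_left]
      _ ≤ ∑' i : ℕ, ((i + (N + 1) : ℕ) : ℝ) * bc ν (i + (N + 1)) * x ^ (i + (N + 1)) :=
          Summable.tsum_le_tsum hterm (htails.mul_left _) htailt
      _ ≤ TTb ν x := by rw [← hdecT]; linarith
  -- S ≥ b * x^(N+1)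
  have hSlow : b * x ^ (N + 1) ≤ SSb ν x := by
    have := Summable.le_tsum (summable_SSb hν x) (N + 1)
      (fun j _ => mul_nonneg (bc_pos hν j).le (pow_pos hx0 j).le)
    exact this
  -- (N+1) * P ≤ S
  have hPS : ((N:ℝ) + 1) * (∑ i ∈ Finset.range (N + 1), bc ν i * x ^ i) ≤ SSb ν x := by
    calc ((N:ℝ) + 1) * (∑ i ∈ Finset.range (N + 1), bc ν i * x ^ i)
        ≤ ((N:ℝ) + 1) * (C * x ^ N) := by
          apply mul_le_mul_of_nonneg_left hP (by positivity)
      _ ≤ b * x * x ^ N := by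
          have : ((N:ℝ) + 1) * C ≤ b * x := by push_cast at hxb ⊢; linarith
          have hxN : (0:ℝ) ≤ x ^ N := (pow_pos hx0 N).le
          nlinarith
      _ = b * x ^ (N + 1) := by rw [pow_succ]; ring
      _ ≤ SSb ν x := hSlow
  -- conclude
  have hgoal : M * SSb ν x ≤ TTb ν x := by
    have htail : ((N:ℝ) + 1) * (SSb ν x - ∑ i ∈ Finset.range (N + 1), bc ν i * x ^ i)
        ≤ TTb ν x := by
      rw [← hdecS]
      have : SSb ν x - ∑ i ∈ Finset.range (N + 1), bc ν i * x ^ i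
          = ∑' i : ℕ, bc ν (i + (N + 1)) * x ^ (i + (N + 1)) := by rw [← hdecS]; ring
      rw [hdecS, this]
      exact hT1
    nlinarith [hS, hN]
  rw [phib, le_div_iff₀ hS]
  exact hgoal
end phi

section bessel
variable {ν : ℝ} (hν : -1 < ν)
include hν

lemma besselI_eq {z : ℂ} (hz : z ≠ 0) :
    besselI ν z = ECb ν ((z / 2) ^ 2) * (z / 2) ^ (ν : ℂ) := by
  have hz2 : z / 2 ≠ 0 := div_ne_zero hz two_ne_zero
  rw [besselI, ECb, ← tsum_mul_right]
  apply tsum_congr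
  intro n
  have hcoef : (1 : ℂ) / ((n.factorial : ℂ) * Complex.Gamma ((n : ℂ) + ν + 1))
      = ((bc ν n : ℝ) : ℂ) := by
    have harg : ((n : ℂ) + ν + 1) = (((n : ℝ) + ν + 1 : ℝ) : ℂ) := by push_cast; ring
    rw [harg, Complex.Gamma_ofReal, bc]
    push_cast
    ring
  have hpow : (z / 2) ^ (2 * (n : ℂ) + ν) = ((z / 2) ^ 2) ^ n * (z / 2) ^ (ν : ℂ) := by
    rw [show (2 * (n : ℂ) + ν) = ((2 * n : ℕ) : ℂ) + (ν : ℂ) by push_cast; ring,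
      Complex.cpow_add _ _ hz2, Complex.cpow_natCast, pow_mul]
  rw [hcoef, hpow]
  ring

lemma slit {r : ℝ} (hr : 0 < r) : ((r : ℂ) / 2) ∈ Complex.slitPlane := by
  rw [Complex.mem_slitPlane_iff]
  left
  simp only [Complex.div_re, Complex.ofReal_re, Complex.ofReal_im]
  norm_num
  positivity

lemma cpow_ne {r : ℝ} (hr : 0 < r) : ((r : ℂ) / 2) ^ (ν : ℂ) ≠ 0 := by
  have hz2 : (r : ℂ) / 2 ≠ 0 := by
    apply div_ne_zero _ two_ne_zero
    exact_mod_cast Complex.ofReal_ne_zero.2 hr.ne'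
  rw [Complex.cpow_def_of_ne_zero hz2]
  exact Complex.exp_ne_zero _

lemma deriv_besselI {r : ℝ} (hr : 0 < r) :
    HasDerivAt (besselI ν)
      (DCb ν (((r : ℂ) / 2) ^ 2) * ((r : ℂ) / 2) * ((r : ℂ) / 2) ^ (ν : ℂ)
        + ECb ν (((r : ℂ) / 2) ^ 2) * ((ν : ℂ) * ((r : ℂ) / 2) ^ ((ν : ℂ) - 1) * (1 / 2)))
      (r : ℂ) := by
  have hne : (r : ℂ) ≠ 0 := Complex.ofReal_ne_zero.2 hr.ne'
  have heq : (fun z => ECb ν ((z / 2) ^ 2) * (z / 2) ^ (ν : ℂ)) =ᶠ[nhds (r : ℂ)] besselI ν := by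
    filter_upwards [IsOpen.mem_nhds isOpen_compl_singleton hne] with z hz
    exact (besselI_eq hν hz).symm
  apply HasDerivAt.congr_of_eventuallyEq _ heq.symm
  have hinner : HasDerivAt (fun z : ℂ => (z / 2) ^ 2) ((r : ℂ) / 2) (r : ℂ) := by
    have := ((hasDerivAt_id ((r : ℂ))).div_const 2).pow 2
    refine this.congr_deriv (Eq.symm ?_)
    simp [id_eq]
    ring
  have h1 : HasDerivAt (fun z : ℂ => ECb ν ((z / 2) ^ 2))
      (DCb ν (((r : ℂ) / 2) ^ 2) * ((r : ℂ) / 2)) (r : ℂ) :=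
    (hasDerivAt_ECb hν _).comp _ hinner
  have h2 : HasDerivAt (fun z : ℂ => (z / 2) ^ (ν : ℂ))
      ((ν : ℂ) * ((r : ℂ) / 2) ^ ((ν : ℂ) - 1) * (1 / 2)) (r : ℂ) := by
    have := HasDerivAt.cpow_const (c := (ν : ℂ)) ((hasDerivAt_id ((r : ℂ))).div_const 2)
      (slit hν hr)
    simpa using this
  exact h1.mul h2

lemma master_num {r : ℝ} (hr : 0 < r) :
    (r : ℂ) * deriv (besselI ν) (r : ℂ)
      = ((ν * SSb ν (r ^ 2 / 4) + 2 * TTb ν (r ^ 2 / 4) : ℝ) : ℂ)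
        * ((r : ℂ) / 2) ^ (ν : ℂ) := by
  have hW : (((r : ℂ) / 2) ^ 2) = (((r ^ 2 / 4 : ℝ) : ℝ) : ℂ) := by push_cast; ring
  have hz2 : (r : ℂ) / 2 ≠ 0 := by
    apply div_ne_zero _ two_ne_zero
    exact Complex.ofReal_ne_zero.2 hr.ne'
  have hstep : ((r : ℂ) / 2) ^ (ν : ℂ) = ((r : ℂ) / 2) ^ ((ν : ℂ) - 1) * ((r : ℂ) / 2) := by
    conv_lhs => rw [show (ν : ℂ) = ((ν : ℂ) - 1) + 1 by ring]
    rw [Complex.cpow_add _ _ hz2, Complex.cpow_one]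
  rw [(deriv_besselI hν hr).deriv, hW, ECb_ofReal hν, DCb_ofReal hν]
  have hT : (r ^ 2 / 2) * DSb ν (r ^ 2 / 4) = 2 * TTb ν (r ^ 2 / 4) := by
    have h4 : (r ^ 2 / 4 : ℝ) ≠ 0 := by positivity
    rw [show (r ^ 2 / 2 : ℝ) = 2 * (r ^ 2 / 4) by ring, mul_assoc, relT hν h4]
  rw [show (ν * SSb ν (r ^ 2 / 4) + 2 * TTb ν (r ^ 2 / 4) : ℝ)
      = ν * SSb ν (r ^ 2 / 4) + (r ^ 2 / 2) * DSb ν (r ^ 2 / 4) by rw [hT]]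
  push_cast
  rw [hstep]
  ring

lemma master_den {r : ℝ} (hr : 0 < r) :
    besselI ν (r : ℂ) = ((SSb ν (r ^ 2 / 4) : ℝ) : ℂ) * ((r : ℂ) / 2) ^ (ν : ℂ) := by
  have hne : (r : ℂ) ≠ 0 := Complex.ofReal_ne_zero.2 hr.ne'
  have hW : (((r : ℂ) / 2) ^ 2) = (((r ^ 2 / 4 : ℝ) : ℝ) : ℂ) := by push_cast; ring
  rw [besselI_eq hν hne, hW, ECb_ofReal hν]

lemma re_formula {r : ℝ} (hr : 0 < r) :
    ((r : ℂ) * deriv (besselI ν) (r : ℂ) / besselI ν (r : ℂ)).re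
      = ν + 2 * phib ν (r ^ 2 / 4) := by
  have hw : (0 : ℝ) < r ^ 2 / 4 := by positivity
  have hS : (0 : ℝ) < SSb ν (r ^ 2 / 4) := SSb_pos hν hw.le
  rw [master_num hν hr, master_den hν hr,
    mul_div_mul_right _ _ (cpow_ne hν hr)]
  rw [← Complex.ofReal_div, Complex.ofReal_re]
  rw [phib]
  field_simp

lemma root_iff {r : ℝ} (hr : 0 < r) (β : ℝ) :
    ((r : ℂ) * deriv (besselI ν) (r : ℂ) - ((β * ν : ℝ) : ℂ) * besselI ν (r : ℂ) = 0)
      ↔ ν + 2 * phib ν (r ^ 2 / 4) - β * ν = 0 := by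
  have hw : (0 : ℝ) < r ^ 2 / 4 := by positivity
  have hS : (0 : ℝ) < SSb ν (r ^ 2 / 4) := SSb_pos hν hw.le
  rw [master_num hν hr, master_den hν hr]
  have hfac : ((ν * SSb ν (r ^ 2 / 4) + 2 * TTb ν (r ^ 2 / 4) : ℝ) : ℂ)
        * ((r : ℂ) / 2) ^ (ν : ℂ)
      - ((β * ν : ℝ) : ℂ) * (((SSb ν (r ^ 2 / 4) : ℝ) : ℂ) * ((r : ℂ) / 2) ^ (ν : ℂ))
      = ((ν * SSb ν (r ^ 2 / 4) + 2 * TTb ν (r ^ 2 / 4)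
          - β * ν * SSb ν (r ^ 2 / 4) : ℝ) : ℂ) * ((r : ℂ) / 2) ^ (ν : ℂ) := by
    push_cast
    ring
  rw [hfac, mul_eq_zero]
  have hcp := cpow_ne hν hr
  constructor
  · rintro (h | h)
    · have hre : ν * SSb ν (r ^ 2 / 4) + 2 * TTb ν (r ^ 2 / 4)
          - β * ν * SSb ν (r ^ 2 / 4) = 0 := by exact_mod_cast h
      rw [phib]
      field_simp
      linarith [hre]
    · exact absurd h hcp
  · intro h
    left
    rw [phib] at h
    have : ν * SSb ν (r ^ 2 / 4) + 2 * TTb ν (r ^ 2 / 4)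
        - β * ν * SSb ν (r ^ 2 / 4) = 0 := by
      have h2 : (ν + 2 * (TTb ν (r ^ 2 / 4) / SSb ν (r ^ 2 / 4)) - β * ν) * SSb ν (r ^ 2 / 4)
          = 0 := by rw [h, zero_mul]
      field_simp at h2
      linarith [h2]
    exact_mod_cast congrArg (fun t : ℝ => (t : ℂ)) this

end bessel

/-- For `ν ∈ (-1,0)` and `0 ≤ β < 1`, the equation
`r I_ν'(r) - βν I_ν(r) = 0` has exactly one root in `(0,∞)`; moreover
`q_ν(r) = r I_ν'(r)/I_ν(r) - βν` is strictly increasing on `(0,∞)`, tends to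
`ν(1-β) < 0` as `r → 0⁺`, and tends to `+∞` as `r → ∞`. -/
theorem exists_unique_root_and_mono (ν β : ℝ) (hν₁ : -1 < ν) (hν₀ : ν < 0)
    (hβ₀ : 0 ≤ β) (hβ₁ : β < 1) :
    (∃! r : ℝ, 0 < r ∧
      (r : ℂ) * deriv (besselI ν) (r : ℂ) - ((β * ν : ℝ) : ℂ) * besselI ν (r : ℂ) = 0) ∧
    StrictMonoOn
      (fun r : ℝ => ((r : ℂ) * deriv (besselI ν) (r : ℂ) / besselI ν (r : ℂ)).re - β * ν)
      (Set.Ioi 0) ∧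
    Filter.Tendsto
      (fun r : ℝ => ((r : ℂ) * deriv (besselI ν) (r : ℂ) / besselI ν (r : ℂ)).re - β * ν)
      (nhdsWithin 0 (Set.Ioi 0)) (nhds (ν * (1 - β))) ∧
    ν * (1 - β) < 0 ∧
    Filter.Tendsto
      (fun r : ℝ => ((r : ℂ) * deriv (besselI ν) (r : ℂ) / besselI ν (r : ℂ)).re - β * ν)
      Filter.atTop Filter.atTop := by
  have hf : ∀ r : ℝ, 0 < r →
      ((r : ℂ) * deriv (besselI ν) (r : ℂ) / besselI ν (r : ℂ)).re - β * ν
        = ν + 2 * phib ν (r ^ 2 / 4) - β * ν := fun r hr => by rw [re_formula hν₁ hr]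
  set Q : ℝ → ℝ := fun r => ν + 2 * phib ν (r ^ 2 / 4) - β * ν with hQdef
  -- strict monotonicity of Q on Ioi 0
  have hQmono : StrictMonoOn Q (Set.Ioi 0) := by
    intro a ha b hb hab
    simp only [Set.mem_Ioi] at ha hb
    have h1 : (0 : ℝ) < a ^ 2 / 4 := by positivity
    have h2 : a ^ 2 / 4 < b ^ 2 / 4 := by nlinarith
    have := phib_strictMono hν₁ (Set.mem_Ioi.2 h1) (Set.mem_Ioi.2 (h1.trans h2)) h2
    simp only [hQdef]
    linarith
  have hmono : StrictMonoOn
      (fun r : ℝ => ((r : ℂ) * deriv (besselI ν) (r : ℂ) / besselI ν (r : ℂ)).re - β * ν)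
      (Set.Ioi 0) := by
    intro a ha b hb hab
    have ha' := Set.mem_Ioi.1 ha
    have hb' := Set.mem_Ioi.1 hb
    simp only
    rw [hf a ha', hf b hb']
    exact hQmono ha hb hab
  -- limit at 0 within Ioi 0
  have hcomp : Filter.Tendsto (fun r : ℝ => r ^ 2 / 4) (nhdsWithin 0 (Set.Ioi 0)) (nhds 0) := by
    have hcont : Filter.Tendsto (fun r : ℝ => r ^ 2 / 4) (nhds 0) (nhds 0) := by
      have := ((continuous_pow 2 (M := ℝ)).div_const 4).tendsto 0
      simpa using this
    exact hcont.mono_left nhdsWithin_le_nhds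
  have hphi0 : Filter.Tendsto (fun r : ℝ => phib ν (r ^ 2 / 4))
      (nhdsWithin 0 (Set.Ioi 0)) (nhds 0) := (phib_cont_zero hν₁).comp hcomp
  have hQlim : Filter.Tendsto Q (nhdsWithin 0 (Set.Ioi 0)) (nhds (ν * (1 - β))) := by
    have h4 := ((hphi0.const_mul (2 : ℝ)).const_add ν).sub_const (β * ν)
    have heq : ν + 2 * (0 : ℝ) - β * ν = ν * (1 - β) := by ring
    rw [heq] at h4
    exact h4
  have hlim0 : Filter.Tendsto
      (fun r : ℝ => ((r : ℂ) * deriv (besselI ν) (r : ℂ) / besselI ν (r : ℂ)).re - β * ν)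
      (nhdsWithin 0 (Set.Ioi 0)) (nhds (ν * (1 - β))) := by
    apply hQlim.congr'
    filter_upwards [self_mem_nhdsWithin] with r hr
    exact (hf r (Set.mem_Ioi.1 hr)).symm
  -- negativity
  have hneg : ν * (1 - β) < 0 := mul_neg_of_neg_of_pos hν₀ (by linarith)
  -- limit at infinity
  have hc : Filter.Tendsto (fun r : ℝ => r ^ 2 / 4) Filter.atTop Filter.atTop :=
    (Filter.tendsto_pow_atTop (two_ne_zero)).atTop_div_const (by norm_num)
  have h2 : Filter.Tendsto (fun r : ℝ => phib ν (r ^ 2 / 4)) Filter.atTop Filter.atTop :=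
    (phib_atTop hν₁).comp hc
  have hQtop : Filter.Tendsto Q Filter.atTop Filter.atTop := by
    have base : Filter.Tendsto (fun r : ℝ => 2 * phib ν (r ^ 2 / 4)) Filter.atTop Filter.atTop :=
      h2.const_mul_atTop two_pos
    have := Filter.tendsto_atTop_add_const_left Filter.atTop ν
      (Filter.tendsto_atTop_add_const_right Filter.atTop (-(β * ν)) base)
    apply this.congr
    intro r
    ring
  have htop : Filter.Tendsto
      (fun r : ℝ => ((r : ℂ) * deriv (besselI ν) (r : ℂ) / besselI ν (r : ℂ)).re - β * ν)
      Filter.atTop Filter.atTop := by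
    apply hQtop.congr'
    filter_upwards [Filter.eventually_gt_atTop 0] with r hr
    exact (hf r hr).symm
  -- existence and uniqueness of the root
  have hexu : ∃! r : ℝ, 0 < r ∧
      (r : ℂ) * deriv (besselI ν) (r : ℂ) - ((β * ν : ℝ) : ℂ) * besselI ν (r : ℂ) = 0 := by
    obtain ⟨a, haQ, ha0⟩ := ((hQlim.eventually_lt_const hneg).and self_mem_nhdsWithin).exists
    have ha0' : (0 : ℝ) < a := Set.mem_Ioi.1 ha0
    obtain ⟨b, hbQ, hba⟩ :=
      ((hQtop.eventually_gt_atTop 0).and (Filter.eventually_gt_atTop a)).exists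
    have hb0 : (0 : ℝ) < b := ha0'.trans hba
    have hQcont : ContinuousOn Q (Set.Icc a b) := by
      intro x hx
      have hx0 : 0 < x := lt_of_lt_of_le ha0' hx.1
      have hw : (0 : ℝ) < x ^ 2 / 4 := by positivity
      have h1 : ContinuousAt (fun r : ℝ => r ^ 2 / 4) x :=
        ((continuous_pow 2 (M := ℝ)).div_const 4).continuousAt
      have hph : ContinuousAt (phib ν) (x ^ 2 / 4) := (hasDerivAt_phib hν₁ hw).continuousAt
      have : ContinuousAt Q x := by
        apply ContinuousAt.sub _ continuousAt_const
        apply ContinuousAt.add continuousAt_const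
        exact ContinuousAt.mul continuousAt_const (ContinuousAt.comp (g := phib ν) (f := fun r : ℝ => r ^ 2 / 4) hph h1)
      exact this.continuousWithinAt
    have h0mem : (0 : ℝ) ∈ Set.Icc (Q a) (Q b) := ⟨haQ.le, hbQ.le⟩
    obtain ⟨c, hcmem, hQc⟩ := intermediate_value_Icc hba.le hQcont h0mem
    have hc0 : 0 < c := lt_of_lt_of_le ha0' hcmem.1
    refine ⟨c, ⟨hc0, (root_iff hν₁ hc0 β).2 hQc⟩, ?_⟩
    rintro y ⟨hy0, hyeq⟩
    have hQy : Q y = 0 := (root_iff hν₁ hy0 β).1 hyeq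
    exact hQmono.injOn (Set.mem_Ioi.2 hy0) (Set.mem_Ioi.2 hc0) (by rw [hQy, hQc])
  exact ⟨hexu, hmono, hlim0, hneg, htop⟩
end
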